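/- For every integer n ≥ 1: the polynomials f_n and g_n (in ℚ[X]) are squarefree (separable), neither has 0 as a root, and there is no complex number z with f_n(z) = 0 and g_n(z) = 0 (they share no roots). -/
import Mathlib
open Polynomial

lemma aux_deg_lt (n : ℕ) (ε : ℤ) : degree (C 2 * X ^ n - C ε : ℤ[X]) < (n + 1 : ℕ) := by
  have : degree (C 2 * X ^ n - C ε : ℤ[X]) ≤ n := by
    calc degree (C 2 * X ^ n - C ε : ℤ[X]) ≤ max (degree (C 2 * X ^ n : ℤ[X])) (degree (C ε : ℤ[X])) := degree_sub_le _ _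
      _ ≤ n := by
          apply max_le
          · exact degree_C_mul_X_pow_le _ _
          · exact degree_C_le.trans (by exact_mod_cast Nat.cast_nonneg n)
  exact lt_of_le_of_lt this (by exact_mod_cast Nat.lt_succ_self n)

lemma aux_eq (n : ℕ) (ε : ℤ) : (X ^ (n + 1) - C 2 * X ^ n + C ε : ℤ[X])
    = X ^ (n + 1) - (C 2 * X ^ n - C ε) := by ring

lemma aux_monic (n : ℕ) (ε : ℤ) : (X ^ (n + 1) - C 2 * X ^ n + C ε : ℤ[X]).Monic := by
  rw [aux_eq]; exact monic_X_pow_sub (aux_deg_lt n ε)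

lemma aux_natDegree (n : ℕ) (ε : ℤ) : (X ^ (n + 1) - C 2 * X ^ n + C ε : ℤ[X]).natDegree = n + 1 := by
  rw [aux_eq]
  have := degree_sub_eq_left_of_degree_lt (p := (X ^ (n+1) : ℤ[X])) (q := C 2 * X ^ n - C ε)
    (by rw [degree_X_pow]; exact aux_deg_lt n ε)
  exact natDegree_eq_of_degree_eq_some (by rw [this, degree_X_pow])

lemma aux_irr (n : ℕ) (hn : 1 ≤ n) (ε : ℤ) (hε : ε = 2 ∨ ε = -2) :
    Irreducible (X ^ (n + 1) - C 2 * X ^ n + C ε : ℤ[X]) := by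
  have hco : ∀ i, (X ^ (n + 1) - C 2 * X ^ n + C ε : ℤ[X]).coeff i
      = (if i = n + 1 then 1 else 0) - (if i = n then 2 else 0) + (if i = 0 then ε else 0) := by
    intro i
    simp only [coeff_add, coeff_sub, coeff_C_mul, coeff_X_pow, coeff_C]; split_ifs <;> ring
  have heis : (X ^ (n + 1) - C 2 * X ^ n + C ε : ℤ[X]).IsEisensteinAt (Ideal.span {2}) := by
    constructor
    · rw [(aux_monic n ε).leadingCoeff, Ideal.mem_span_singleton]
      norm_num
    · intro i hi
      rw [aux_natDegree] at hi
      rw [hco, Ideal.mem_span_singleton]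
      rcases hε with h | h <;> subst h <;>
        split_ifs <;> omega
    · rw [hco, Ideal.span_singleton_pow, Ideal.mem_span_singleton]
      have h0 : ¬ (0 = n + 1) := by omega
      have h1 : ¬ (0 = n) := by omega
      rcases hε with h | h <;> subst h <;> simp [h0, h1] <;> omega
  exact heis.irreducible (Ideal.isPrime_of_prime (by simpa using Int.prime_two))
    (aux_monic n ε).isPrimitive (by rw [aux_natDegree]; omega)

lemma aux_sqf (n : ℕ) (hn : 1 ≤ n) (ε : ℤ) (hε : ε = 2 ∨ ε = -2) :
    Squarefree (X ^ (n + 1) - C 2 * X ^ n + C (ε : ℚ) : ℚ[X]) := by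
  have h := (IsPrimitive.Int.irreducible_iff_irreducible_map_cast
    (aux_monic n ε).isPrimitive).mp (aux_irr n hn ε hε)
  have hmap : Polynomial.map (Int.castRingHom ℚ) (X ^ (n + 1) - C 2 * X ^ n + C ε)
      = (X ^ (n + 1) - C 2 * X ^ n + C (ε : ℚ) : ℚ[X]) := by
    simp only [Polynomial.map_add, Polynomial.map_sub, Polynomial.map_mul, Polynomial.map_pow, Polynomial.map_X, Polynomial.map_C, map_intCast]
    norm_num
  rw [hmap] at h
  exact h.squarefree

theorem f_g_squarefree_no_common_root (n : ℕ) (hn : 1 ≤ n) :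
    Squarefree (X ^ (n + 1) - C 2 * X ^ n - C 2 : ℚ[X]) ∧
    Squarefree (X ^ (n + 1) - C 2 * X ^ n + C 2 : ℚ[X]) ∧
    Polynomial.eval 0 (X ^ (n + 1) - C 2 * X ^ n - C 2 : ℚ[X]) ≠ 0 ∧
    Polynomial.eval 0 (X ^ (n + 1) - C 2 * X ^ n + C 2 : ℚ[X]) ≠ 0 ∧
    ¬ ∃ z : ℂ, Polynomial.aeval z (X ^ (n + 1) - C 2 * X ^ n - C 2 : ℚ[X]) = 0 ∧
               Polynomial.aeval z (X ^ (n + 1) - C 2 * X ^ n + C 2 : ℚ[X]) = 0 := by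
  have hn0 : n ≠ 0 := by omega
  refine ⟨?_, ?_, ?_, ?_, ?_⟩
  · have h := aux_sqf n hn (-2) (Or.inr rfl)
    have he : (X ^ (n + 1) - C 2 * X ^ n + C ((-2 : ℤ) : ℚ) : ℚ[X])
        = X ^ (n + 1) - C 2 * X ^ n - C 2 := by
      rw [show ((-2 : ℤ) : ℚ) = -(2 : ℚ) by norm_num, C_neg]
      ring
    rwa [he] at h
  · have h := aux_sqf n hn 2 (Or.inl rfl)
    have he : (X ^ (n + 1) - C 2 * X ^ n + C ((2 : ℤ) : ℚ) : ℚ[X])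
        = X ^ (n + 1) - C 2 * X ^ n + C 2 := by
      push_cast
      ring
    rwa [he] at h
  · simp [zero_pow, hn0]
  · simp [zero_pow, hn0]
  · rintro ⟨z, h1, h2⟩
    have hd : ((X ^ (n + 1) - C 2 * X ^ n + C 2) - (X ^ (n + 1) - C 2 * X ^ n - C 2) : ℚ[X])
        = C 4 := by rw [show (4 : ℚ) = 2 + 2 by norm_num, C_add]; ring
    have h3 : (Polynomial.aeval z) (C 4 : ℚ[X]) = 0 := by
      rw [← hd, map_sub, h1, h2, sub_zero]
    simp at h3
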